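/- Let N = J_2 ⊕ J_2 be the 4×4 complex matrix whose only nonzero entries are the (1,2)-entry and the (3,4)-entry, both equal to 1, regarded as a linear endomorphism of ℂ⁴ via matrix-vector multiplication. Then a 4×4 complex matrix T (acting on ℂ⁴ by matrix-vector multiplication) belongs to Col(N) if and only if there exist complex numbers t, γ₁₁, γ₁₂, γ₁₃, γ₁₄, γ₃₁, γ₃₂, γ₃₃, γ₃₄ with t·(γ₁₁γ₃₃ − γ₁₃γ₃₁) ≠ 0 such that T has rows (γ₁₁, γ₁₂, γ₁₃, γ₁₄), (0, tγ₁₁, 0, tγ₁₃), (γ₃₁, γ₃₂, γ₃₃, γ₃₄), (0, tγ₃₁, 0, tγ₃₃). -/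

import Mathlib

set_option linter.unnecessarySeqFocus false

open Submodule

/-- A subspace `M` is invariant under the endomorphism `A`. -/
def InvSub {V : Type*} [AddCommGroup V] [Module ℂ V] (A : V →ₗ[ℂ] V)
    (M : Submodule ℂ V) : Prop :=
  M.map A ≤ M

/-- `T ∈ Col(A)`: `T` is bijective and a subspace is `A`-invariant iff its image
under `T` is `A`-invariant. -/
def Col {V : Type*} [AddCommGroup V] [Module ℂ V] (A T : V →ₗ[ℂ] V) : Prop :=
  Function.Bijective T ∧ ∀ M : Submodule ℂ V, InvSub A M ↔ InvSub A (M.map T)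

/-- The cyclic subspace `(A)_x`, i.e. the span of `{A^n x : n ≥ 0}`. -/
def cyc {V : Type*} [AddCommGroup V] [Module ℂ V] (A : V →ₗ[ℂ] V) (x : V) :
    Submodule ℂ V :=
  Submodule.span ℂ (Set.range fun n : ℕ => (A ^ n) x)

lemma bij_iff4 (A : Matrix (Fin 4) (Fin 4) ℂ) :
    Function.Bijective A.mulVecLin ↔ A.det ≠ 0 := by
  have hcoe : ⇑A.mulVecLin = A.mulVec := by funext v; rw [Matrix.mulVecLin_apply]
  rw [hcoe]
  constructor
  · intro h
    have := Matrix.mulVec_injective_iff_isUnit.mp h.1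
    simpa [isUnit_iff_ne_zero] using (Matrix.isUnit_iff_isUnit_det _).mp this
  · intro h
    have hu : IsUnit A := (Matrix.isUnit_iff_isUnit_det _).mpr (isUnit_iff_ne_zero.mpr h)
    exact ⟨Matrix.mulVec_injective_iff_isUnit.mpr hu,
      Matrix.mulVec_surjective_iff_isUnit.mpr hu⟩

lemma invSub_span {V : Type*} [AddCommGroup V] [Module ℂ V] (A : V →ₗ[ℂ] V) (s : Set V)
    (h : ∀ x ∈ s, A x ∈ Submodule.span ℂ s) : InvSub A (Submodule.span ℂ s) := by
  show Submodule.map A (Submodule.span ℂ s) ≤ Submodule.span ℂ s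
  rw [Submodule.map_span, Submodule.span_le]
  rintro y ⟨x, hx, rfl⟩
  exact h x hx

lemma invSub_apply {V : Type*} [AddCommGroup V] [Module ℂ V] {A : V →ₗ[ℂ] V}
    {M : Submodule ℂ V} (h : InvSub A M) {x : V} (hx : x ∈ M) : A x ∈ M :=
  h (Submodule.mem_map_of_mem hx)

theorem stmt19 (N : Matrix (Fin 4) (Fin 4) ℂ)
    (hN : N = Matrix.of ![![0, 1, 0, 0], ![0, 0, 0, 0], ![0, 0, 0, 1], ![0, 0, 0, 0]])
    (T : Matrix (Fin 4) (Fin 4) ℂ) :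
    Col N.mulVecLin T.mulVecLin ↔
      ∃ t γ₁₁ γ₁₂ γ₁₃ γ₁₄ γ₃₁ γ₃₂ γ₃₃ γ₃₄ : ℂ,
        t * (γ₁₁ * γ₃₃ - γ₁₃ * γ₃₁) ≠ 0 ∧
        T = Matrix.of ![![γ₁₁, γ₁₂, γ₁₃, γ₁₄],
                        ![0, t * γ₁₁, 0, t * γ₁₃],
                        ![γ₃₁, γ₃₂, γ₃₃, γ₃₄],
                        ![0, t * γ₃₁, 0, t * γ₃₃]] := by
  have hNv : ∀ v : Fin 4 → ℂ, N.mulVec v = ![v 1, 0, v 3, 0] := by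
    intro v; funext i
    fin_cases i <;> simp [hN, Matrix.mulVec, dotProduct, Fin.sum_univ_four]
  have hNN : ∀ v : Fin 4 → ℂ, N.mulVec (N.mulVec v) = 0 := by
    intro v; rw [hNv, hNv]; funext i; fin_cases i <;> simp
  constructor
  · rintro ⟨hbij, hinv⟩
    have hinj : ∀ x : Fin 4 → ℂ, T.mulVec x = 0 → x = 0 := by
      intro x hx
      have h0 : T.mulVecLin x = T.mulVecLin 0 := by
        simp [Matrix.mulVecLin_apply, hx]
      exact hbij.1 h0
    -- Step 0 : if N v = 0 then N (T v) = 0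
    have key0 : ∀ v : Fin 4 → ℂ, N.mulVec v = 0 → N.mulVec (T.mulVec v) = 0 := by
      intro v hv
      have h1 : InvSub N.mulVecLin (span ℂ {v}) := by
        apply invSub_span
        intro x hx
        simp only [Set.mem_singleton_iff] at hx
        subst hx
        rw [Matrix.mulVecLin_apply, hv]
        exact zero_mem _
      have h2 := (hinv _).mp h1
      rw [Submodule.map_span, Set.image_singleton, Matrix.mulVecLin_apply] at h2
      have h3 := invSub_apply h2 (mem_span_singleton_self (T.mulVec v))
      rw [Matrix.mulVecLin_apply] at h3
      obtain ⟨a, ha⟩ := mem_span_singleton.mp h3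
      by_cases h0 : a = 0
      · rw [← ha, h0, zero_smul]
      · have h4 : (a * a) • T.mulVec v = 0 := by
          rw [← smul_smul]
          calc a • (a • T.mulVec v) = a • N.mulVec (T.mulVec v) := by rw [ha]
          _ = N.mulVec (a • T.mulVec v) := by rw [Matrix.mulVec_smul]
          _ = N.mulVec (N.mulVec (T.mulVec v)) := by rw [ha]
          _ = 0 := hNN _
        have h5 : T.mulVec v = 0 :=
          (smul_eq_zero.mp h4).resolve_left (mul_ne_zero h0 h0)
        rw [hinj v h5, Matrix.mulVec_zero, Matrix.mulVec_zero]
    -- Step P : pair spans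
    have keyP : ∀ v : Fin 4 → ℂ, ∃ a b : ℂ,
        a • T.mulVec v + b • T.mulVec (N.mulVec v) = N.mulVec (T.mulVec v) := by
      intro v
      have h1 : InvSub N.mulVecLin (span ℂ {v, N.mulVec v}) := by
        apply invSub_span
        intro x hx
        simp only [Set.mem_insert_iff, Set.mem_singleton_iff] at hx
        rcases hx with rfl | rfl
        · exact subset_span (by rw [Matrix.mulVecLin_apply]; exact Set.mem_insert_of_mem _ rfl)
        · rw [Matrix.mulVecLin_apply, hNN]
          exact zero_mem _
      have h2 := (hinv _).mp h1
      rw [Submodule.map_span, Set.image_pair, Matrix.mulVecLin_apply,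
        Matrix.mulVecLin_apply] at h2
      have h3 := invSub_apply h2 (subset_span (Set.mem_insert (T.mulVec v) _))
      rw [Matrix.mulVecLin_apply] at h3
      exact mem_span_pair.mp h3
    -- Step B : refined pair conclusion
    have keyB : ∀ v : Fin 4 → ℂ, ∀ i : Fin 4, v i ≠ 0 → (N.mulVec v) i = 0 →
        ∃ b : ℂ, b • T.mulVec (N.mulVec v) = N.mulVec (T.mulVec v) := by
      intro v i hvi hNvi
      obtain ⟨a, b, hab⟩ := keyP v
      have hTNv0 : N.mulVec (T.mulVec (N.mulVec v)) = 0 := key0 _ (hNN v)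
      have ha : a • N.mulVec (T.mulVec v) = 0 := by
        have h := congrArg N.mulVec hab
        simpa only [Matrix.mulVec_add, Matrix.mulVec_smul, hTNv0, smul_zero, add_zero,
          hNN (T.mulVec v)] using h
      by_cases h0 : a = 0
      · exact ⟨b, by rwa [h0, zero_smul, zero_add] at hab⟩
      · have hNTv : N.mulVec (T.mulVec v) = 0 :=
          (smul_eq_zero.mp ha).resolve_left h0
        have hz : T.mulVec (a • v + b • N.mulVec v) = 0 := by
          rw [Matrix.mulVec_add, Matrix.mulVec_smul, Matrix.mulVec_smul, hab, hNTv]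
        have h5 := hinj _ hz
        have h6 := congrFun h5 i
        simp only [Pi.add_apply, Pi.smul_apply, smul_eq_mul, Pi.zero_apply, hNvi,
          mul_zero, add_zero] at h6
        exact absurd ((mul_eq_zero.mp h6).resolve_left h0) hvi
    -- zeros in rows 1 and 3 (columns 0 and 2)
    have hA1 := key0 ![(1:ℂ),0,0,0] (by rw [hNv]; funext i; fin_cases i <;> simp)
    rw [hNv] at hA1
    have z10 : T 1 0 = 0 := by
      have h := congrFun hA1 0
      simpa [Matrix.mulVec, dotProduct, Fin.sum_univ_four] using h
    have z30 : T 3 0 = 0 := by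
      have h := congrFun hA1 2
      simpa [Matrix.mulVec, dotProduct, Fin.sum_univ_four] using h
    have hA3 := key0 ![(0:ℂ),0,1,0] (by rw [hNv]; funext i; fin_cases i <;> simp)
    rw [hNv] at hA3
    have z12 : T 1 2 = 0 := by
      have h := congrFun hA3 0
      simpa [Matrix.mulVec, dotProduct, Fin.sum_univ_four] using h
    have z32 : T 3 2 = 0 := by
      have h := congrFun hA3 2
      simpa [Matrix.mulVec, dotProduct, Fin.sum_univ_four] using h
    -- the three scalars
    obtain ⟨b₂, hb₂⟩ := keyB ![(0:ℂ),1,0,0] 1 (by norm_num) (by rw [hNv]; norm_num)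
    obtain ⟨b₄, hb₄⟩ := keyB ![(0:ℂ),0,0,1] 3 (by norm_num [Matrix.cons_val_three, Matrix.vecHead])
      (by rw [hNv]; norm_num [Matrix.cons_val_three, Matrix.vecHead])
    obtain ⟨c, hc⟩ := keyB ![(0:ℂ),1,0,1] 1 (by norm_num) (by rw [hNv]; norm_num)
    rw [hNv] at hb₂ hb₄ hc
    rw [hNv (T.mulVec _)] at hb₂ hb₄ hc
    have hb2a := congrFun hb₂ 0
    have hb2b := congrFun hb₂ 2
    have hb4a := congrFun hb₄ 0
    have hb4b := congrFun hb₄ 2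
    have hca := congrFun hc 0
    have hcb := congrFun hc 2
    simp only [Matrix.mulVec, dotProduct, Fin.sum_univ_four, Pi.smul_apply,
      smul_eq_mul, Matrix.cons_val_zero, Matrix.cons_val_one, Matrix.head_cons,
      Matrix.cons_val_two, Matrix.tail_cons, Matrix.cons_val_three, Matrix.cons_val_fin_one,
      mul_zero, mul_one, zero_add, add_zero, zero_mul] at hb2a hb2b hb4a hb4b hca hcb
    -- Δ ≠ 0
    have hΔ : T 0 0 * T 2 2 - T 0 2 * T 2 0 ≠ 0 := by
      intro h
      have w1 : T.mulVec ![T 2 2, 0, -(T 2 0), 0] = 0 := by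
        funext i
        fin_cases i <;>
          simp [Matrix.mulVec, dotProduct, Fin.sum_univ_four, z10, z30, z12, z32] <;>
          first | linear_combination h | linear_combination -h | linear_combination
      have w2 := hinj _ w1
      have hT22 : T 2 2 = 0 := by have hh := congrFun w2 0; simpa using hh
      have hT20 : T 2 0 = 0 := by have hh := congrFun w2 2; simpa using hh
      have w3 : T.mulVec ![T 0 2, 0, -(T 0 0), 0] = 0 := by
        funext i
        fin_cases i <;>
          simp [Matrix.mulVec, dotProduct, Fin.sum_univ_four, z10, z30, z12, z32,
            hT22, hT20] <;>
          first | linear_combination h | linear_combination -h | linear_combination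
      have w4 := hinj _ w3
      have hT02 : T 0 2 = 0 := by have hh := congrFun w4 0; simpa using hh
      have hT00 : T 0 0 = 0 := by have hh := congrFun w4 2; simpa using hh
      have w5 : T.mulVec ![1,0,0,0] = 0 := by
        funext i
        fin_cases i <;>
          simp [Matrix.mulVec, dotProduct, Fin.sum_univ_four, z10, z30, hT20, hT00]
      have w6 := hinj _ w5
      have := congrFun w6 0
      simp at this
    -- b₂ = c and b₄ = c
    have e1' : (b₂ - c) * T 0 0 + (b₄ - c) * T 0 2 = 0 := by
      linear_combination hb2a + hb4a - hca
    have e2' : (b₂ - c) * T 2 0 + (b₄ - c) * T 2 2 = 0 := by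
      linear_combination hb2b + hb4b - hcb
    have hbc2 : b₂ = c := by
      have hh : (b₂ - c) * (T 0 0 * T 2 2 - T 0 2 * T 2 0) = 0 := by
        linear_combination T 2 2 * e1' - T 0 2 * e2'
      have := (mul_eq_zero.mp hh).resolve_right hΔ
      exact sub_eq_zero.mp this
    have hbc4 : b₄ = c := by
      have hh : (b₄ - c) * (T 0 0 * T 2 2 - T 0 2 * T 2 0) = 0 := by
        linear_combination T 0 0 * e2' - T 2 0 * e1'
      have := (mul_eq_zero.mp hh).resolve_right hΔ
      exact sub_eq_zero.mp this
    rw [hbc2] at hb2a hb2b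
    rw [hbc4] at hb4a hb4b
    -- assemble matrix form
    have g11 : T 1 1 = c * T 0 0 := hb2a.symm
    have g31 : T 3 1 = c * T 2 0 := hb2b.symm
    have g13 : T 1 3 = c * T 0 2 := hb4a.symm
    have g33 : T 3 3 = c * T 2 2 := hb4b.symm
    have hTeq : T = Matrix.of ![![T 0 0, T 0 1, T 0 2, T 0 3],
                        ![0, c * T 0 0, 0, c * T 0 2],
                        ![T 2 0, T 2 1, T 2 2, T 2 3],
                        ![0, c * T 2 0, 0, c * T 2 2]] := by
      funext i j
      fin_cases i <;> fin_cases j <;>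
        simp [Matrix.of_apply, z10, z30, z12, z32, g11, g31, g13, g33]
    have hdet0 : T.det ≠ 0 := (bij_iff4 T).mp hbij
    have hdet : T.det = c ^ 2 * (T 0 0 * T 2 2 - T 0 2 * T 2 0) ^ 2 := by
      nth_rewrite 1 [hTeq]
      simp [Matrix.det_succ_row_zero, Fin.sum_univ_succ, Fin.succAbove, Fin.lt_def,
        Fin.castSucc, Fin.castAdd, Fin.castLE, Matrix.cons_val_succ, Matrix.of_apply,
          -Fin.val_fin_lt, -Fin.lt_def]
      ring
    have hne : c * (T 0 0 * T 2 2 - T 0 2 * T 2 0) ≠ 0 := by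
      intro h0
      apply hdet0
      rw [hdet]
      linear_combination (c * (T 0 0 * T 2 2 - T 0 2 * T 2 0)) * h0
    exact ⟨c, T 0 0, T 0 1, T 0 2, T 0 3, T 2 0, T 2 1, T 2 2, T 2 3, hne, hTeq⟩
  · rintro ⟨t, a, b, c, d, e, f, g, h, hne, hT⟩
    have ht : t ≠ 0 := left_ne_zero_of_mul hne
    have hdet : T.det ≠ 0 := by
      rw [hT]
      have : (Matrix.of ![![a, b, c, d], ![0, t * a, 0, t * c], ![e, f, g, h],
          ![0, t * e, 0, t * g]]).det = t ^ 2 * (a * g - c * e) ^ 2 := by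
        simp [Matrix.det_succ_row_zero, Fin.sum_univ_succ, Fin.succAbove, Fin.lt_def,
          Fin.castSucc, Fin.castAdd, Fin.castLE, Matrix.cons_val_succ, Matrix.of_apply,
          -Fin.val_fin_lt, -Fin.lt_def]
        ring
      rw [this]
      intro h0
      apply hne
      have h1 : (t * (a * g - c * e)) ^ 2 = 0 := by linear_combination h0
      exact pow_eq_zero_iff (by norm_num) |>.mp h1
    have hbij : Function.Bijective T.mulVecLin := (bij_iff4 T).mpr hdet
    have hcomm : ∀ v : Fin 4 → ℂ, N.mulVec (T.mulVec v) = t • T.mulVec (N.mulVec v) := by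
      intro v
      funext i
      fin_cases i <;>
        simp [hN, hT, Matrix.mulVec, dotProduct, Fin.sum_univ_four] <;> ring
    refine ⟨hbij, fun M => ⟨fun hM => ?_, fun hM => ?_⟩⟩
    · rintro x ⟨y, ⟨m, hm, rfl⟩, rfl⟩
      rw [Matrix.mulVecLin_apply, Matrix.mulVecLin_apply, hcomm]
      have hNm : N.mulVec m ∈ M := by
        have := invSub_apply hM hm
        rwa [Matrix.mulVecLin_apply] at this
      have : T.mulVec (N.mulVec m) ∈ M.map T.mulVecLin := by
        rw [← Matrix.mulVecLin_apply]
        exact mem_map_of_mem hNm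
      exact smul_mem _ t this
    · rintro x ⟨m, hm, rfl⟩
      rw [Matrix.mulVecLin_apply]
      have h1 : T.mulVecLin m ∈ M.map T.mulVecLin := mem_map_of_mem hm
      have h2 := invSub_apply hM h1
      rw [Matrix.mulVecLin_apply, Matrix.mulVecLin_apply, hcomm] at h2
      have h3 : T.mulVec (N.mulVec m) ∈ M.map T.mulVecLin := by
        have := smul_mem _ t⁻¹ h2
        rwa [inv_smul_smul₀ ht] at this
      obtain ⟨m', hm', hm'eq⟩ := h3
      rw [Matrix.mulVecLin_apply] at hm'eq
      have : m' = N.mulVec m := by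
        apply hbij.1
        rw [Matrix.mulVecLin_apply, Matrix.mulVecLin_apply, hm'eq]
      rwa [← this]
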